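/- Second Green's formula for the Laplacian: for all f0, g0 ∈ H0^2 := {f ∈ dom d : df ∈ dom δ}, one has ⟨δd f0, g0⟩ - ⟨f0, δd g0⟩ = ⟨γ0 f0, γ1 d g0⟩_{G^{1/2}} - ⟨γ1 d f0, γ0 g0⟩_{G^{1/2}}. -/

import Mathlib

open scoped InnerProductSpace
open ContinuousLinearMap

theorem statement_9
    {H0 H1 G H01 H11 : Type*}
    [NormedAddCommGroup H0] [InnerProductSpace ℂ H0] [CompleteSpace H0]
    [NormedAddCommGroup H1] [InnerProductSpace ℂ H1] [CompleteSpace H1]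
    [NormedAddCommGroup G] [InnerProductSpace ℂ G] [CompleteSpace G]
    [NormedAddCommGroup H01] [InnerProductSpace ℂ H01] [CompleteSpace H01]
    [NormedAddCommGroup H11] [InnerProductSpace ℂ H11] [CompleteSpace H11]
    (ι0 : H01 →L[ℂ] H0) (d : H01 →L[ℂ] H1) (γ0 : H01 →L[ℂ] G)
    (ι1 : H11 →L[ℂ] H1) (δ : H11 →L[ℂ] H0)
    (hι0 : Function.Injective ι0) (hι1 : Function.Injective ι1)
    (hgraph0 : ∀ f g : H01, ⟪f, g⟫_ℂ = ⟪ι0 f, ι0 g⟫_ℂ + ⟪d f, d g⟫_ℂ)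
    (hgraph1 : ∀ f g : H11, ⟪f, g⟫_ℂ = ⟪ι1 f, ι1 g⟫_ℂ + ⟪δ f, δ g⟫_ℂ)
    (hdom : Dense (Set.range ι0))
    (hker : Dense (ι0 '' {f : H01 | γ0 f = 0}))
    (hran : Dense (Set.range γ0))
    (hadj1 : ∀ (g : H11) (f : H01), γ0 f = 0 → ⟪d f, ι1 g⟫_ℂ = ⟪ι0 f, δ g⟫_ℂ)
    (hadj2 : ∀ (g1 : H1) (h0 : H0),
      (∀ f : H01, γ0 f = 0 → ⟪d f, g1⟫_ℂ = ⟪ι0 f, h0⟫_ℂ) →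
      ∃ g : H11, ι1 g = g1 ∧ δ g = h0)
    (γ1 : H11 →L[ℂ] G)
    (hγ1K : ∀ g : H11, (∀ f : H01, ⟪d f, ι1 g⟫_ℂ = ⟪ι0 f, δ g⟫_ℂ) → γ1 g = 0)
    (hγ1N : ∀ (g : H11) (n : H01),
      (∃ h : H01, ι0 h = δ g ∧ d h = -(ι1 g)) → ι0 n = δ g → γ1 g = -(γ0 n))
    : ∀ (f0 g0 : H01) (gf gg : H11), ι1 gf = d f0 → ι1 gg = d g0 →
      ∀ n m a b : H01,
      (∃ g : H11, ι1 g = d n ∧ δ g = -(ι0 n)) → γ0 n = γ0 f0 →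
      (∃ g : H11, ι1 g = d m ∧ δ g = -(ι0 m)) → γ0 m = γ0 g0 →
      (∃ g : H11, ι1 g = d a ∧ δ g = -(ι0 a)) → γ0 a = γ1 gf →
      (∃ g : H11, ι1 g = d b ∧ δ g = -(ι0 b)) → γ0 b = γ1 gg →
      ⟪δ gf, ι0 g0⟫_ℂ - ⟪ι0 f0, δ gg⟫_ℂ = ⟪n, b⟫_ℂ - ⟪a, m⟫_ℂ := by
  -- the graph of `d` as a complete subspace of `H0 ×₂ H1`
  let Tlin : H01 →ₗ[ℂ] WithLp 2 (H0 × H1) :=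
    (WithLp.linearEquiv 2 ℂ (H0 × H1)).symm.toLinearMap ∘ₗ (ι0.toLinearMap.prod d.toLinearMap)
  have hfst : ∀ f : H01, (Tlin f).fst = ι0 f := fun f => rfl
  have hsnd : ∀ f : H01, (Tlin f).snd = d f := fun f => rfl
  have hpres : ∀ f g : H01, ⟪Tlin f, Tlin g⟫_ℂ = ⟪f, g⟫_ℂ := by
    intro f g
    rw [WithLp.prod_inner_apply]
    exact (hgraph0 f g).symm
  let Tiso : H01 →ₗᵢ[ℂ] WithLp 2 (H0 × H1) := Tlin.isometryOfInner hpres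
  let S : Submodule ℂ (WithLp 2 (H0 × H1)) := LinearMap.range Tlin
  haveI : CompleteSpace S := by
    have : IsComplete (S : Set (WithLp 2 (H0 × H1))) := by
      have h1 : (S : Set (WithLp 2 (H0 × H1))) = Tiso '' Set.univ := by
        simp [S, Set.image_univ]; rfl
      rw [h1, LinearIsometry.isComplete_image_iff]
      exact completeSpace_iff_isComplete_univ.1 inferInstance
    exact this.completeSpace_coe
  have hSS : Sᗮᗮ = S := Submodule.orthogonal_orthogonal S
  -- the subspace K1 of H11 where Green's identity holds with no boundary condition
  let K1 : Submodule ℂ H11 :=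
    { carrier := {g : H11 | ∀ f : H01, ⟪d f, ι1 g⟫_ℂ = ⟪ι0 f, δ g⟫_ℂ},
      add_mem' := by
        intro u v hu hv f
        simp only [map_add, inner_add_right, hu f, hv f]
      zero_mem' := by intro f; simp
      smul_mem' := by
        intro c u hu f
        simp only [map_smul, inner_smul_right, hu f] }
  have hK1mem : ∀ u : H11, u ∈ K1 ↔ ∀ f : H01, ⟪d f, ι1 u⟫_ℂ = ⟪ι0 f, δ u⟫_ℂ :=
    fun u => Iff.rfl
  haveI : CompleteSpace K1 := by
    have hcl : IsClosed (K1 : Set H11) := by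
      have h1 : (K1 : Set H11) = ⋂ f : H01, {g : H11 | ⟪d f, ι1 g⟫_ℂ = ⟪ι0 f, δ g⟫_ℂ} := by
        ext u; simp [hK1mem]
      rw [h1]
      refine isClosed_iInter fun f => isClosed_eq ?_ ?_
      · exact Continuous.inner continuous_const ι1.continuous
      · exact Continuous.inner continuous_const δ.continuous
    exact hcl.completeSpace_coe
  -- elements of K1ᗮ are "anti-harmonic": (δ r, -ι1 r) lies in the graph of d
  have hcompl : ∀ r : H11, r ∈ K1ᗮ → ∃ p : H01, ι0 p = δ r ∧ d p = -(ι1 r) := by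
    intro r hr
    have hz : (WithLp.equiv 2 (H0 × H1)).symm (δ r, -(ι1 r)) ∈ S := by
      rw [← hSS]
      rw [Submodule.mem_orthogonal]
      intro u hu
      have hu' : ∀ f : H01, ⟪ι0 f, u.fst⟫_ℂ + ⟪d f, u.snd⟫_ℂ = 0 := by
        intro f
        have := (Submodule.mem_orthogonal S u).1 hu (Tlin f) ⟨f, rfl⟩
        rw [WithLp.prod_inner_apply] at this
        exact this
      obtain ⟨g', hg'1, hg'2⟩ := hadj2 u.snd (-u.fst) (by
        intro f _
        rw [inner_neg_right]
        linear_combination hu' f)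
      have hg'K1 : g' ∈ K1 := by
        rw [hK1mem]
        intro f
        rw [hg'1, hg'2, inner_neg_right]
        linear_combination hu' f
      have hrg' : ⟪g', r⟫_ℂ = 0 := (Submodule.mem_orthogonal K1 r).1 hr g' hg'K1
      have : ⟪ι1 g', ι1 r⟫_ℂ + ⟪δ g', δ r⟫_ℂ = 0 := by rw [← hgraph1]; exact hrg'
      rw [WithLp.prod_inner_apply]
      have e1 : ((WithLp.equiv 2 (H0 × H1)).symm (δ r, -(ι1 r))).fst = δ r := rfl
      have e2 : ((WithLp.equiv 2 (H0 × H1)).symm (δ r, -(ι1 r))).snd = -(ι1 r) := rfl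
      have hu1 : u.fst = -(δ g') := by rw [hg'2, neg_neg]
      show ⟪u.fst, δ r⟫_ℂ + ⟪u.snd, -(ι1 r)⟫_ℂ = 0
      rw [hu1, ← hg'1, inner_neg_left, inner_neg_right]
      linear_combination -this
    obtain ⟨p, hp⟩ := hz
    exact ⟨p, congrArg WithLp.fst hp, congrArg WithLp.snd hp⟩
  -- harmonic elements (witnesses) are orthogonal to K1
  have hNperp : ∀ (nn : H01) (h : H11), ι1 h = d nn → δ h = -(ι0 nn) →
      ∀ u : H11, u ∈ K1 → ⟪u, h⟫_ℂ = 0 := by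
    intro nn h hh1 hh2 u hu
    have h1 : ⟪d nn, ι1 u⟫_ℂ = ⟪ι0 nn, δ u⟫_ℂ := (hK1mem u).1 hu nn
    have h2 : ⟪ι1 u, d nn⟫_ℂ = ⟪δ u, ι0 nn⟫_ℂ := by
      have h3 := congrArg (starRingEnd ℂ) h1
      rwa [inner_conj_symm, inner_conj_symm] at h3
    rw [hgraph1, hh1, hh2, inner_neg_right, h2]
    ring
  -- key lemma: first Green formula in terms of harmonic representatives
  have key : ∀ (f : H01) (g : H11) (nn bb : H01),
      (∃ h : H11, ι1 h = d nn ∧ δ h = -(ι0 nn)) → γ0 nn = γ0 f →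
      (∃ k : H11, ι1 k = d bb ∧ δ k = -(ι0 bb)) → γ0 bb = γ1 g →
      ⟪d f, ι1 g⟫_ℂ - ⟪ι0 f, δ g⟫_ℂ = ⟪nn, bb⟫_ℂ := by
    intro f g nn bb ⟨h, hh1, hh2⟩ hγnn ⟨k, hk1, hk2⟩ hγbb
    -- γ1 k = γ1 g
    have hγ1k : γ1 k = γ1 g := by
      have := hγ1N k (-bb) ⟨-bb, by rw [map_neg, hk2], by rw [map_neg, hk1]⟩
        (by rw [map_neg, hk2])
      rw [this, map_neg, neg_neg, hγbb]
    -- decompose g - k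
    obtain ⟨y, hy, r, hr, hgk⟩ := Submodule.exists_add_mem_mem_orthogonal (K := K1) (g - k)
    -- γ1 r = 0
    have hγ1r : γ1 r = 0 := by
      have h1 : γ1 y = 0 := hγ1K y ((hK1mem y).1 hy)
      have h2 : γ1 (g - k) = 0 := by rw [map_sub, hγ1k, sub_self]
      have := congrArg γ1 hgk
      rw [map_add, h1, zero_add, h2] at this
      exact this.symm
    -- r is anti-harmonic, with p; γ0 p = 0; then p = 0 and r = 0
    obtain ⟨p, hp1, hp2⟩ := hcompl r hr
    have hγ0p : γ0 p = 0 := by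
      have := hγ1N r p ⟨p, hp1, hp2⟩ hp1
      rw [hγ1r] at this
      have := this.symm
      rwa [neg_eq_zero] at this
    have hp0 : p = 0 := by
      rw [← inner_self_eq_zero (𝕜 := ℂ), hgraph0 p p]
      nth_rewrite 2 [hp2]
      rw [inner_neg_right, hadj1 r p hγ0p, ← hp1]
      ring
    have hr0 : r = 0 := by
      rw [← inner_self_eq_zero (𝕜 := ℂ)]
      have h1 : ι1 r = 0 := by
        have := hp2; rw [hp0, map_zero] at this
        exact (neg_eq_zero.1 this.symm)
      have h2 : δ r = 0 := by
        have := hp1; rw [hp0, map_zero] at this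
        exact this.symm
      rw [hgraph1, h1, h2, inner_zero_left, inner_zero_left, add_zero]
    -- so g = k + y with y ∈ K1
    have hgky : g = k + y := by
      rw [hr0, add_zero] at hgk
      rw [← hgk]; abel
    -- B f g = B nn g  (difference has zero trace)
    have hγdiff : γ0 (f - nn) = 0 := by rw [map_sub, hγnn, sub_self]
    have step1 : ⟪d f, ι1 g⟫_ℂ - ⟪ι0 f, δ g⟫_ℂ = ⟪d nn, ι1 g⟫_ℂ - ⟪ι0 nn, δ g⟫_ℂ := by
      have := hadj1 g (f - nn) hγdiff
      rw [map_sub, map_sub, inner_sub_left, inner_sub_left] at this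
      linear_combination this
    -- B nn g = ⟪h, g⟫ = ⟪h, k⟫ = ⟪nn, bb⟫
    have step2 : ⟪d nn, ι1 g⟫_ℂ - ⟪ι0 nn, δ g⟫_ℂ = ⟪h, g⟫_ℂ := by
      rw [hgraph1 h g, hh1, hh2, inner_neg_left]
      ring
    have step3 : ⟪h, g⟫_ℂ = ⟪h, k⟫_ℂ := by
      have hy0 : ⟪h, y⟫_ℂ = 0 := by
        have h0 := congrArg (starRingEnd ℂ) (hNperp nn h hh1 hh2 y hy)
        rwa [inner_conj_symm, map_zero] at h0
      rw [hgky, inner_add_right, hy0, add_zero]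
    have step4 : ⟪h, k⟫_ℂ = ⟪nn, bb⟫_ℂ := by
      rw [hgraph1 h k, hh1, hh2, hk1, hk2, inner_neg_neg, hgraph0 nn bb]
      ring
    rw [step1, step2, step3, step4]
  -- conclude
  intro f0 g0 gf gg hf hg n m a b hn hγn hm hγm ha hγa hb hγb
  have e1 := key f0 gg n b hn hγn hb hγb
  have e2 := key g0 gf m a hm hγm ha hγa
  rw [hg] at e1
  rw [hf] at e2
  have e2' := congrArg (starRingEnd ℂ) e2
  rw [map_sub, inner_conj_symm, inner_conj_symm, inner_conj_symm] at e2'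
  linear_combination e1 - e2'
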